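/- Let Ω′ ⊆ ℝⁿ be open, let l > 1, 0 < p ≤ 1, T > 0, κ > 0, B > 0, c̄ ≥ 0, F > 0, and let f : ℝⁿ → ℝ be twice continuously differentiable with 0 < f(x) ≤ F and Δf(x) − (l/(l−1))·‖∇f(x)‖²/f(x) ≥ −κ for all x ∈ Ω′, where Δ denotes the Laplacian and ∇ the gradient. Let c : ℝⁿ × ℝ → ℝ satisfy 0 ≤ c(x,t) ≤ c̄ for x ∈ Ω′, t ∈ [0,T), and let μ ≥ c̄·((F + κT)^{1/(l−1)}/B)^{1−p}. Then the function w(x,t) := B·e^{μt}·(f(x) + κ(T−t))^{−1/(l−1)} satisfies ∂_t w(x,t) − Δ_x w(x,t) − c(x,t)·w(x,t)^p ≥ 0 for all x ∈ Ω′ and t ∈ [0,T). -/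

import Mathlib

open MeasureTheory Set Filter

open Topology

/-- The Laplacian of `f : ℝⁿ → ℝ`, the sum of the second partial derivatives. -/
noncomputable def spatialLaplacian (n : ℕ) (f : EuclideanSpace ℝ (Fin n) → ℝ)
    (x : EuclideanSpace ℝ (Fin n)) : ℝ :=
  ∑ i : Fin n,
    fderiv ℝ (fun y => fderiv ℝ f y (EuclideanSpace.single i 1)) x
      (EuclideanSpace.single i 1)

lemma fderiv_const_mul'' {E : Type*} [NormedAddCommGroup E] [NormedSpace ℝ E]
    (g : E → ℝ) {C : ℝ} (hC : C ≠ 0) (y : E) :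
    fderiv ℝ (fun z => C * g z) y = C • fderiv ℝ g y := by
  by_cases hd : DifferentiableAt ℝ g y
  · exact fderiv_const_mul hd C
  · rw [fderiv_zero_of_not_differentiableAt hd, smul_zero,
      fderiv_zero_of_not_differentiableAt]
    intro hcontra
    have h2 := hcontra.const_mul C⁻¹
    simp only [← mul_assoc, inv_mul_cancel₀ hC, one_mul] at h2
    exact hd h2

lemma spatialLaplacian_const_mul (n : ℕ) (h : EuclideanSpace ℝ (Fin n) → ℝ)
    {C : ℝ} (hC : C ≠ 0) (x : EuclideanSpace ℝ (Fin n)) :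
    spatialLaplacian n (fun y => C * h y) x = C * spatialLaplacian n h x := by
  unfold spatialLaplacian
  rw [Finset.mul_sum]
  refine Finset.sum_congr rfl fun i _ => ?_
  have h1 : (fun y => fderiv ℝ (fun z => C * h z) y (EuclideanSpace.single i 1))
      = fun y => C * fderiv ℝ h y (EuclideanSpace.single i 1) := by
    funext y; rw [fderiv_const_mul'' h hC y]; simp
  rw [h1, fderiv_const_mul'' _ hC x]; simp

lemma grad_norm_sq (n : ℕ) (f : EuclideanSpace ℝ (Fin n) → ℝ)
    (x : EuclideanSpace ℝ (Fin n)) :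
    ‖gradient f x‖ ^ 2
      = ∑ i : Fin n, (fderiv ℝ f x (EuclideanSpace.single i 1)) ^ 2 := by
  have hfd : ∀ v, fderiv ℝ f x v = inner ℝ (gradient f x) v := by
    intro v
    have h : fderiv ℝ f x = InnerProductSpace.toDual ℝ _ (gradient f x) :=
      ((InnerProductSpace.toDual ℝ _).apply_symm_apply (fderiv ℝ f x)).symm
    rw [h, InnerProductSpace.toDual_apply_apply]
  have hco : ∀ i, fderiv ℝ f x (EuclideanSpace.single i 1) = gradient f x i := by
    intro i
    rw [hfd, EuclideanSpace.inner_single_right]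
    simp
  rw [EuclideanSpace.norm_eq, Real.sq_sqrt (by positivity)]
  refine Finset.sum_congr rfl fun i _ => ?_
  rw [hco i, Real.norm_eq_abs, sq_abs]

lemma spatialLaplacian_rpow (n : ℕ) (f : EuclideanSpace ℝ (Fin n) → ℝ)
    (hf : ContDiff ℝ 2 f) (a r : ℝ) (x : EuclideanSpace ℝ (Fin n))
    (hx : 0 < f x + a) :
    spatialLaplacian n (fun y => (f y + a) ^ (-r : ℝ)) x
      = (-r) * (f x + a) ^ (-r - 1) * spatialLaplacian n f x
        + (-r) * (-r - 1) * (f x + a) ^ (-r - 2)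
          * ∑ i : Fin n, (fderiv ℝ f x (EuclideanSpace.single i 1)) ^ 2 := by
  have hfd : Differentiable ℝ f := hf.differentiable (by norm_num)
  have hcont : Continuous fun y => f y + a := hf.continuous.add continuous_const
  have hev0 : ∀ᶠ y in 𝓝 x, 0 < f y + a :=
    eventually_of_mem ((isOpen_lt continuous_const hcont).mem_nhds hx) fun y hy => hy
  have key : ∀ y, 0 < f y + a →
      HasFDerivAt (fun z => (f z + a) ^ (-r : ℝ))
        (((-r) * (f y + a) ^ (-r - 1)) • fderiv ℝ f y) y := fun y hy =>
    ((hfd y).hasFDerivAt.add_const a).rpow_const (Or.inl hy.ne')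
  unfold spatialLaplacian
  have hsum : ∀ i : Fin n,
      fderiv ℝ (fun y => fderiv ℝ (fun z => (f z + a) ^ (-r : ℝ)) y
          (EuclideanSpace.single i 1)) x (EuclideanSpace.single i 1)
      = (-r) * (f x + a) ^ (-r - 1)
          * fderiv ℝ (fun y => fderiv ℝ f y (EuclideanSpace.single i 1)) x
              (EuclideanSpace.single i 1)
        + (-r) * (-r - 1) * (f x + a) ^ (-r - 2)
          * (fderiv ℝ f x (EuclideanSpace.single i 1)) ^ 2 := by
    intro i
    set e := EuclideanSpace.single i (1 : ℝ) with he
    have hev : (fun y => fderiv ℝ (fun z => (f z + a) ^ (-r : ℝ)) y e)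
        =ᶠ[𝓝 x] fun y => ((-r) * (f y + a) ^ (-r - 1)) * fderiv ℝ f y e := by
      filter_upwards [hev0] with y hy
      rw [(key y hy).fderiv]; rfl
    rw [hev.fderiv_eq]
    have hg1 : HasFDerivAt (fun y => (-r) * (f y + a) ^ (-r - 1 : ℝ))
        ((-r) • (((-r - 1) * (f x + a) ^ (-r - 2)) • fderiv ℝ f x)) x := by
      have h := (((hfd x).hasFDerivAt.add_const a).rpow_const
        (p := -r - 1) (Or.inl hx.ne')).const_mul (-r)
      have hexp : (-r - 1 - 1 : ℝ) = -r - 2 := by ring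
      rw [hexp] at h
      exact h
    have hg2d : DifferentiableAt ℝ (fun y => fderiv ℝ f y e) x := by
      have hC1 : ContDiff ℝ 1 (fderiv ℝ f) := hf.fderiv_right (by norm_num)
      exact (((ContinuousLinearMap.apply ℝ ℝ e).contDiff.comp hC1).differentiable
        (by norm_num)).differentiableAt
    have hmul := hg1.mul hg2d.hasFDerivAt
    rw [HasFDerivAt.fderiv (f := fun y => (-r) * (f y + a) ^ (-r - 1 : ℝ) * fderiv ℝ f y e) hmul]
    simp only [ContinuousLinearMap.add_apply, ContinuousLinearMap.smul_apply,
      smul_eq_mul]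
    ring
  rw [Finset.sum_congr rfl fun i _ => hsum i, Finset.sum_add_distrib,
    ← Finset.mul_sum, ← Finset.mul_sum]

set_option maxHeartbeats 1000000 in
/-- With `l > 1`, `0 < p ≤ 1`, `f` satisfying `0 < f ≤ F` and
`Δf − (l/(l−1))‖∇f‖²/f ≥ −κ` on `Ω′`, `0 ≤ c ≤ c̄` on `Ω′ × [0,T)`, and
`μ ≥ c̄ ((F + κT)^{1/(l−1)}/B)^{1−p}`, the function
`w(x,t) = B e^{μt} (f(x) + κ(T−t))^{−1/(l−1)}` satisfies
`w_t − Δw − c w^p ≥ 0` on `Ω′ × [0,T)`. -/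
theorem stmt_17 (n : ℕ) (Ω' : Set (EuclideanSpace ℝ (Fin n))) (hΩ' : IsOpen Ω')
    (l p T κ B cbar F : ℝ) (hl : 1 < l) (hp0 : 0 < p) (hp1 : p ≤ 1) (hT : 0 < T)
    (hκ : 0 < κ) (hB : 0 < B) (hcbar : 0 ≤ cbar) (hF : 0 < F)
    (f : EuclideanSpace ℝ (Fin n) → ℝ) (hf : ContDiff ℝ 2 f)
    (hf_pos : ∀ x ∈ Ω', 0 < f x) (hf_le : ∀ x ∈ Ω', f x ≤ F)
    (hf_ineq : ∀ x ∈ Ω',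
      -κ ≤ spatialLaplacian n f x - (l / (l - 1)) * ‖gradient f x‖ ^ 2 / f x)
    (c : EuclideanSpace ℝ (Fin n) → ℝ → ℝ)
    (hc : ∀ x ∈ Ω', ∀ t ∈ Ico (0:ℝ) T, c x t ∈ Icc (0:ℝ) cbar)
    (μ : ℝ) (hμ : cbar * ((F + κ * T) ^ (1 / (l - 1)) / B) ^ (1 - p) ≤ μ) :
    ∀ x ∈ Ω', ∀ t ∈ Ico (0:ℝ) T,
      0 ≤ deriv (fun s => B * Real.exp (μ * s) *
              (f x + κ * (T - s)) ^ (-(1 / (l - 1)) : ℝ)) t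
          - spatialLaplacian n (fun y => B * Real.exp (μ * t) *
              (f y + κ * (T - t)) ^ (-(1 / (l - 1)) : ℝ)) x
          - c x t * (B * Real.exp (μ * t) *
              (f x + κ * (T - t)) ^ (-(1 / (l - 1)) : ℝ)) ^ p := by
  intro x hx t ht
  obtain ⟨ht0, htT⟩ := ht
  have hl1 : (0:ℝ) < l - 1 := by linarith
  set r : ℝ := 1 / (l - 1) with hr
  have hrpos : 0 < r := by positivity
  have hfx := hf_pos x hx
  have hTt : 0 < T - t := by linarith
  have hg0 : 0 < f x + κ * (T - t) := by positivity
  set g : ℝ := f x + κ * (T - t) with hgdef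
  have hEpos : 0 < B * Real.exp (μ * t) := by positivity
  set Ex : ℝ := B * Real.exp (μ * t) with hE
  -- time derivative
  have hd1 : HasDerivAt (fun s : ℝ => f x + κ * (T - s)) (-κ) t := by
    have h := (((hasDerivAt_const t T).sub (hasDerivAt_id t)).const_mul κ).const_add (f x)
    exact h.congr_deriv (by ring)
  have hd2 : HasDerivAt (fun s : ℝ => (f x + κ * (T - s)) ^ (-r : ℝ))
      ((-κ) * (-r) * g ^ (-r - 1)) t := hd1.rpow_const (Or.inl hg0.ne')
  have hd3 : HasDerivAt (fun s : ℝ => B * Real.exp (μ * s)) (μ * Ex) t := by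
    have h := (((hasDerivAt_id t).const_mul μ).exp).const_mul B
    exact h.congr_deriv (by simp only [id_eq]; rw [hE]; ring)
  have hd := hd3.mul hd2
  -- Laplacian
  set S : ℝ := ∑ i : Fin n, (fderiv ℝ f x (EuclideanSpace.single i 1)) ^ 2 with hS
  set Δ : ℝ := spatialLaplacian n f x with hΔ
  have hlap : spatialLaplacian n
      (fun y => Ex * (f y + κ * (T - t)) ^ (-r : ℝ)) x
      = Ex * ((-r) * g ^ (-r - 1) * Δ + (-r) * (-r - 1) * g ^ (-r - 2) * S) := by
    rw [spatialLaplacian_const_mul n _ hEpos.ne' x,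
      spatialLaplacian_rpow n f hf (κ * (T - t)) r x hg0]
  rw [HasDerivAt.deriv (f := fun s => B * Real.exp (μ * s) * (f x + κ * (T - s)) ^ (-r : ℝ)) hd, hlap]
  -- middle term nonnegative
  have hSnn : 0 ≤ S := by positivity
  have hfg : f x ≤ g := by nlinarith
  have hgr1 : (0:ℝ) < g ^ (-r - 1 : ℝ) := Real.rpow_pos_of_pos hg0 _
  have hmid : 0 ≤ κ + Δ - (r + 1) * S / g := by
    have hlr : l / (l - 1) = r + 1 := by rw [hr]; field_simp; ring
    have h1 := hf_ineq x hx
    rw [grad_norm_sq, hlr, ← hS, ← hΔ] at h1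
    have h2 : (r + 1) * S / g ≤ (r + 1) * S / f x := by
      apply div_le_div_of_nonneg_left (by positivity) hfx hfg
    linarith
  have hgg : g ^ (-r - 2 : ℝ) = g ^ (-r - 1 : ℝ) / g := by
    rw [show (-r - 2 : ℝ) = (-r - 1) - 1 by ring, Real.rpow_sub hg0, Real.rpow_one]
  -- comparison of reaction term
  have hgnr : (0:ℝ) < g ^ (-r : ℝ) := Real.rpow_pos_of_pos hg0 _
  set w : ℝ := Ex * g ^ (-r : ℝ) with hw
  have hw0 : 0 < w := by positivity
  have hwp : 0 < w ^ (p : ℝ) := Real.rpow_pos_of_pos hw0 _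
  have hFT : 0 < F + κ * T := by positivity
  have hK0 : 0 ≤ (F + κ * T) ^ (r : ℝ) / B := by positivity
  have hμ0 : 0 ≤ μ := le_trans (by positivity) hμ
  set K : ℝ := ((F + κ * T) ^ (r : ℝ) / B) ^ (1 - p : ℝ) with hKdef
  set m : ℝ := B * (F + κ * T) ^ (-r : ℝ) with hm
  have hm0 : 0 < m := by positivity
  have hwm : m ≤ w := by
    have hgle : g ≤ F + κ * T := by
      have h1 := hf_le x hx
      have h2 : κ * (T - t) ≤ κ * T := by nlinarith
      rw [hgdef]; linarith
    have h3 : (F + κ * T) ^ (-r : ℝ) ≤ g ^ (-r : ℝ) :=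
      Real.rpow_le_rpow_of_nonpos hg0 hgle (by linarith)
    have h4 : (1:ℝ) ≤ Real.exp (μ * t) := Real.one_le_exp (by positivity)
    calc m = B * (F + κ * T) ^ (-r : ℝ) := hm
      _ ≤ B * g ^ (-r : ℝ) := mul_le_mul_of_nonneg_left h3 hB.le
      _ = B * 1 * g ^ (-r : ℝ) := by ring
      _ ≤ B * Real.exp (μ * t) * g ^ (-r : ℝ) :=
          mul_le_mul_of_nonneg_right (mul_le_mul_of_nonneg_left h4 hB.le) hgnr.le
      _ = w := by rw [hw, hE]
  have hKm : K * m ^ (1 - p : ℝ) = 1 := by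
    rw [hKdef, ← Real.mul_rpow hK0 hm0.le]
    have hinner : (F + κ * T) ^ (r : ℝ) / B * m = 1 := by
      rw [hm]
      field_simp
      rw [← Real.rpow_add hFT]
      simp
    rw [hinner, Real.one_rpow]
  have hw1p : m ^ (1 - p : ℝ) ≤ w ^ (1 - p : ℝ) :=
    Real.rpow_le_rpow hm0.le hwm (by linarith)
  have hwsplit : w = w ^ (1 - p : ℝ) * w ^ (p : ℝ) := by
    rw [← Real.rpow_add hw0, show (1 - p + p : ℝ) = 1 by ring, Real.rpow_one]
  have hreact : c x t * w ^ (p : ℝ) ≤ μ * w := by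
    obtain ⟨hc0, hc1⟩ := hc x hx t ⟨ht0, htT⟩
    have c1 : c x t * w ^ (p : ℝ) ≤ cbar * w ^ (p:ℝ) :=
      mul_le_mul_of_nonneg_right hc1 hwp.le
    have c2 : cbar * w ^ (p:ℝ) = (cbar * K) * m ^ (1 - p : ℝ) * w ^ (p:ℝ) := by
      rw [mul_assoc cbar K, hKm, mul_one]
    have hcK : 0 ≤ cbar * K := by positivity
    have c3 : (cbar * K) * m ^ (1 - p : ℝ) * w ^ (p:ℝ)
        ≤ (cbar * K) * w ^ (1 - p : ℝ) * w ^ (p:ℝ) :=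
      mul_le_mul_of_nonneg_right (mul_le_mul_of_nonneg_left hw1p hcK) hwp.le
    have c4 : (cbar * K) * w ^ (1 - p : ℝ) * w ^ (p:ℝ) = (cbar * K) * w := by
      rw [mul_assoc, ← hwsplit]
    have c5 : (cbar * K) * w ≤ μ * w := by
      apply mul_le_mul_of_nonneg_right _ hw0.le
      rw [hKdef, hr]
      exact hμ
    linarith
  -- assemble
  have hsplit : μ * Ex * g ^ (-r:ℝ) + Ex * ((-κ) * (-r) * g ^ (-r - 1 : ℝ))
      - Ex * ((-r) * g ^ (-r - 1 : ℝ) * Δ + (-r) * (-r - 1) * g ^ (-r - 2 : ℝ) * S)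
      = μ * w + Ex * r * g ^ (-r - 1 : ℝ) * (κ + Δ - (r + 1) * S / g) := by
    rw [hgg, hw]
    field_simp
    ring
  have hnn : 0 ≤ Ex * r * g ^ (-r - 1 : ℝ) * (κ + Δ - (r + 1) * S / g) := by
    have : 0 < Ex * r * g ^ (-r - 1 : ℝ) := by positivity
    positivity
  simp only [← hgdef, ← hE]
  linarith [hreact, hnn, hsplit, hw]
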